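/- Under Massart's bounded noise condition with margin h (i.e., f* ∈ F is the Bayes classifier and |E[Y|X]| ≥ h a.s., Y ∈ {−1,+1}), the excess loss class G_Y = { (x,y) ↦ 1[f(x)≠y] − 1[f*(x)≠y] : f ∈ F } is a (1/h, 1)-Bernstein class: for every g ∈ G_Y, P g² ≤ (1/h)·P g. Moreover the Bayes risk satisfies R(f*) ≤ (1/2)(1 − h). -/

import Mathlib

open MeasureTheory

lemma massart_piece_int {X : Type*} [MeasurableSpace X]
    (μ : Measure (X × ℝ)) [IsFiniteMeasure μ]
    (hyint : Integrable (fun p : X × ℝ => p.2) μ)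
    (A : Set X) (hA : MeasurableSet A) (c d : ℝ) :
    Integrable (fun p : X × ℝ =>
      Set.indicator {p : X × ℝ | p.1 ∈ A} (fun p => c + d * p.2) p) μ :=
  ((integrable_const c).add (hyint.const_mul d)).indicator (hA.preimage measurable_fst)

lemma massart_piece {X : Type*} [MeasurableSpace X]
    (μ : Measure (X × ℝ)) [IsFiniteMeasure μ]
    (η : X → ℝ)
    (hcond : ∀ A : Set X, MeasurableSet A →
      ∫ p in {p : X × ℝ | p.1 ∈ A}, p.2 ∂μ = ∫ x in A, η x ∂(μ.map Prod.fst))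
    (hyint : Integrable (fun p : X × ℝ => p.2) μ)
    (A : Set X) (hA : MeasurableSet A) (c d : ℝ) :
    ∫ p : X × ℝ, Set.indicator {p : X × ℝ | p.1 ∈ A} (fun p => c + d * p.2) p ∂μ
      = c * ((μ.map Prod.fst) A).toReal + d * ∫ x in A, η x ∂(μ.map Prod.fst) := by
  have hS : MeasurableSet {p : X × ℝ | p.1 ∈ A} := hA.preimage measurable_fst
  have hμS : μ {p : X × ℝ | p.1 ∈ A} = (μ.map Prod.fst) A := by
    rw [Measure.map_apply measurable_fst hA]; rfl
  rw [integral_indicator hS,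
    integral_add (integrable_const c).integrableOn (hyint.const_mul d).integrableOn,
    setIntegral_const, measureReal_def, integral_const_mul, hcond A hA, hμS, smul_eq_mul, mul_comm]

set_option maxHeartbeats 1000000 in
open Classical in
theorem massart_bernstein {X : Type*} [MeasurableSpace X]
    (μ : Measure (X × ℝ)) [IsProbabilityMeasure μ]
    (h : ℝ) (hh : 0 < h) (hh1 : h ≤ 1)
    (η : X → ℝ) (hη : Measurable η)
    (hcond : ∀ A : Set X, MeasurableSet A →
      ∫ p in {p : X × ℝ | p.1 ∈ A}, p.2 ∂μ = ∫ x in A, η x ∂(μ.map Prod.fst))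
    (hlabel : ∀ᵐ p ∂μ, p.2 = 1 ∨ p.2 = -1)
    (hmargin : ∀ᵐ x ∂(μ.map Prod.fst), h ≤ |η x|)
    (fs : X → ℝ) (hfs : ∀ x, fs x = if 0 ≤ η x then 1 else -1)
    (F : Set (X → ℝ)) (hfsF : fs ∈ F) :
    (∀ f ∈ F, Measurable f →
      ∫ p, ((if f p.1 ≠ p.2 then (1 : ℝ) else 0) - (if fs p.1 ≠ p.2 then 1 else 0)) ^ 2 ∂μ
        ≤ (1 / h) *
          ∫ p, ((if f p.1 ≠ p.2 then (1 : ℝ) else 0) - (if fs p.1 ≠ p.2 then 1 else 0)) ∂μ) ∧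
    (μ {p : X × ℝ | fs p.1 ≠ p.2}).toReal ≤ (1 - h) / 2 := by
  set ν := μ.map Prod.fst with hνdef
  haveI : IsProbabilityMeasure ν := Measure.isProbabilityMeasure_map measurable_fst.aemeasurable
  -- labels are bounded, hence integrable
  have hyint : Integrable (fun p : X × ℝ => p.2) μ := by
    refine Integrable.mono' (integrable_const 1) measurable_snd.aestronglyMeasurable ?_
    filter_upwards [hlabel] with p hp
    rcases hp with hp | hp <;> rw [hp] <;> norm_num
  -- crude bounds on set integrals of η
  have hbound : ∀ A : Set X, MeasurableSet A →
      ∫ x in A, η x ∂ν ≤ (ν A).toReal ∧ -((ν A).toReal) ≤ ∫ x in A, η x ∂ν := by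
    intro A hA
    have hS : MeasurableSet {p : X × ℝ | p.1 ∈ A} := hA.preimage measurable_fst
    have hμS : μ {p : X × ℝ | p.1 ∈ A} = ν A := by
      rw [hνdef, Measure.map_apply measurable_fst hA]; rfl
    rw [← hcond A hA]
    constructor
    · calc ∫ p in {p : X × ℝ | p.1 ∈ A}, p.2 ∂μ
          ≤ ∫ _ in {p : X × ℝ | p.1 ∈ A}, (1 : ℝ) ∂μ := by
            refine integral_mono_ae hyint.integrableOn (integrable_const 1) ?_
            filter_upwards [ae_restrict_of_ae hlabel] with p hp
            rcases hp with hp | hp <;> rw [hp] <;> norm_num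
        _ = (ν A).toReal := by rw [setIntegral_const, measureReal_def, hμS, smul_eq_mul, mul_one]
    · calc -((ν A).toReal)
          = ∫ _ in {p : X × ℝ | p.1 ∈ A}, (-1 : ℝ) ∂μ := by
            rw [setIntegral_const, measureReal_def, hμS, smul_eq_mul]; ring
        _ ≤ ∫ p in {p : X × ℝ | p.1 ∈ A}, p.2 ∂μ := by
            refine integral_mono_ae (integrable_const (-1)) hyint.integrableOn ?_
            filter_upwards [ae_restrict_of_ae hlabel] with p hp
            rcases hp with hp | hp <;> rw [hp] <;> norm_num
  -- η is a.e. bounded by 1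
  have hUp : ∀ n : ℕ, ν {x | 1 + 1/((n : ℝ)+1) ≤ η x ∧ η x ≤ (n : ℝ)+2} = 0 := by
    intro n
    set A : Set X := {x | 1 + 1/((n : ℝ)+1) ≤ η x ∧ η x ≤ (n : ℝ)+2} with hAdef
    have hA : MeasurableSet A :=
      (measurableSet_le measurable_const hη).inter (measurableSet_le hη measurable_const)
    have hI : IntegrableOn η A ν := by
      refine Measure.integrableOn_of_bounded (measure_ne_top ν A) hη.aestronglyMeasurable
        (M := (n : ℝ) + 2) ?_
      filter_upwards [ae_restrict_mem hA] with x hx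
      have h1 := hx.1; have h2 := hx.2
      rw [Real.norm_eq_abs, abs_le]
      constructor
      · have : (0:ℝ) < 1/((n:ℝ)+1) := by positivity
        nlinarith
      · exact h2
    have h1 : (1 + 1/((n : ℝ)+1)) * (ν A).toReal ≤ ∫ x in A, η x ∂ν := by
      rw [mul_comm, ← smul_eq_mul, ← measureReal_def]; exact setIntegral_ge_of_const_le hA (measure_ne_top ν A) (fun x hx => hx.1) hI
    have h2 : ∫ x in A, η x ∂ν ≤ (ν A).toReal := (hbound A hA).1
    have h3 : (0:ℝ) ≤ (ν A).toReal := ENNReal.toReal_nonneg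
    have hpos : (0:ℝ) < 1/((n:ℝ)+1) := by positivity
    have h4 : (ν A).toReal = 0 := by nlinarith
    exact ((ENNReal.toReal_eq_zero_iff _).mp h4).resolve_right (measure_ne_top ν A)
  have hDown : ∀ n : ℕ, ν {x | η x ≤ -(1 + 1/((n : ℝ)+1)) ∧ -((n : ℝ)+2) ≤ η x} = 0 := by
    intro n
    set A : Set X := {x | η x ≤ -(1 + 1/((n : ℝ)+1)) ∧ -((n : ℝ)+2) ≤ η x} with hAdef
    have hA : MeasurableSet A :=
      (measurableSet_le hη measurable_const).inter (measurableSet_le measurable_const hη)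
    have hI : IntegrableOn η A ν := by
      refine Measure.integrableOn_of_bounded (measure_ne_top ν A) hη.aestronglyMeasurable
        (M := (n : ℝ) + 2) ?_
      filter_upwards [ae_restrict_mem hA] with x hx
      have h1 := hx.1; have h2 := hx.2
      rw [Real.norm_eq_abs, abs_le]
      constructor
      · exact h2
      · have : (0:ℝ) < 1/((n:ℝ)+1) := by positivity
        nlinarith
    have h1 : (1 + 1/((n : ℝ)+1)) * (ν A).toReal ≤ ∫ x in A, (-η x) ∂ν := by
      rw [mul_comm, ← smul_eq_mul, ← measureReal_def]
      refine setIntegral_ge_of_const_le hA (measure_ne_top ν A) ?_ hI.neg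
      intro x hx
      have := hx.1; linarith
    have h1' : ∫ x in A, (-η x) ∂ν = - ∫ x in A, η x ∂ν := integral_neg η
    have h2 : -((ν A).toReal) ≤ ∫ x in A, η x ∂ν := (hbound A hA).2
    have h3 : (0:ℝ) ≤ (ν A).toReal := ENNReal.toReal_nonneg
    have hpos : (0:ℝ) < 1/((n:ℝ)+1) := by positivity
    have h4 : (ν A).toReal = 0 := by nlinarith
    exact ((ENNReal.toReal_eq_zero_iff _).mp h4).resolve_right (measure_ne_top ν A)
  have hη1 : ∀ᵐ x ∂ν, |η x| ≤ 1 := by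
    have hnull : ν {x | 1 < |η x|} = 0 := by
      have hsub : {x | 1 < |η x|} ⊆ ⋃ n : ℕ,
        ({x | 1 + 1/((n : ℝ)+1) ≤ η x ∧ η x ≤ (n : ℝ)+2} ∪
         {x | η x ≤ -(1 + 1/((n : ℝ)+1)) ∧ -((n : ℝ)+2) ≤ η x}) := by
        intro x hx
        simp only [Set.mem_setOf_eq] at hx
        rcases le_or_gt 0 (η x) with hs | hs
        · have hgt : 1 < η x := by rwa [abs_of_nonneg hs] at hx
          obtain ⟨n, hn⟩ := exists_nat_gt (max (1/(η x - 1)) (η x))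
          have hpos : (0:ℝ) < η x - 1 := by linarith
          have hlt : 1/(η x - 1) < (n:ℝ) := lt_of_le_of_lt (le_max_left _ _) hn
          have h1 : 1 < (n:ℝ) * (η x - 1) := by rw [div_lt_iff₀ hpos] at hlt; linarith
          have hn1 : (0:ℝ) < (n:ℝ) + 1 := by positivity
          have h5 : 1/((n:ℝ)+1) ≤ η x - 1 := by rw [div_le_iff₀ hn1]; nlinarith
          have h6 := lt_of_le_of_lt (le_max_right _ _) hn
          exact Set.mem_iUnion.mpr ⟨n, Or.inl ⟨by linarith, by linarith⟩⟩
        · have hgt : 1 < -η x := by rw [abs_of_neg hs] at hx; exact hx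
          obtain ⟨n, hn⟩ := exists_nat_gt (max (1/(-η x - 1)) (-η x))
          have hpos : (0:ℝ) < -η x - 1 := by linarith
          have hlt : 1/(-η x - 1) < (n:ℝ) := lt_of_le_of_lt (le_max_left _ _) hn
          have h1 : 1 < (n:ℝ) * (-η x - 1) := by rw [div_lt_iff₀ hpos] at hlt; linarith
          have hn1 : (0:ℝ) < (n:ℝ) + 1 := by positivity
          have h5 : 1/((n:ℝ)+1) ≤ -η x - 1 := by rw [div_le_iff₀ hn1]; nlinarith
          have h6 := lt_of_le_of_lt (le_max_right _ _) hn
          exact Set.mem_iUnion.mpr ⟨n, Or.inr ⟨by linarith, by linarith⟩⟩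
      exact measure_mono_null hsub
        (measure_iUnion_null fun n => measure_union_null (hUp n) (hDown n))
    rw [ae_iff]
    convert hnull using 2
    ext x; simp [not_le]
  have hηint : Integrable η ν := by
    refine Integrable.mono' (integrable_const 1) hη.aestronglyMeasurable ?_
    filter_upwards [hη1] with x hx
    rwa [Real.norm_eq_abs]
  -- margin inequalities for set integrals
  have hmargpos : ∀ A : Set X, MeasurableSet A → (∀ x ∈ A, 0 ≤ η x) →
      h * (ν A).toReal ≤ ∫ x in A, η x ∂ν := by
    intro A hA hpos
    have : ∫ _ in A, (h : ℝ) ∂ν ≤ ∫ x in A, η x ∂ν := by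
      refine integral_mono_ae (integrable_const h) hηint.integrableOn ?_
      filter_upwards [ae_restrict_of_ae hmargin, ae_restrict_mem hA] with x h1 h2
      rwa [abs_of_nonneg (hpos x h2)] at h1
    rwa [setIntegral_const, smul_eq_mul, mul_comm] at this
  have hmargneg : ∀ A : Set X, MeasurableSet A → (∀ x ∈ A, ¬ 0 ≤ η x) →
      ∫ x in A, η x ∂ν ≤ -(h * (ν A).toReal) := by
    intro A hA hneg
    have : ∫ x in A, η x ∂ν ≤ ∫ _ in A, (-h : ℝ) ∂ν := by
      refine integral_mono_ae hηint.integrableOn (integrable_const (-h)) ?_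
      filter_upwards [ae_restrict_of_ae hmargin, ae_restrict_mem hA] with x h1 h2
      have hx : η x < 0 := lt_of_not_ge (hneg x h2)
      rw [abs_of_neg hx] at h1; linarith
    rw [setIntegral_const, measureReal_def, smul_eq_mul] at this
    linarith [this]
  constructor
  · -- Bernstein part
    intro f hf hfm
    set A2p : Set X := {x | 0 ≤ η x ∧ f x = -1} with hA2pdef
    set A2m : Set X := {x | ¬ 0 ≤ η x ∧ f x = 1} with hA2mdef
    set A3p : Set X := {x | 0 ≤ η x ∧ ¬ f x = 1 ∧ ¬ f x = -1} with hA3pdef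
    set A3m : Set X := {x | ¬ 0 ≤ η x ∧ ¬ f x = 1 ∧ ¬ f x = -1} with hA3mdef
    have hle : MeasurableSet {x | 0 ≤ η x} := measurableSet_le measurable_const hη
    have hf1 : MeasurableSet {x | f x = 1} := hfm (measurableSet_singleton 1)
    have hfm1 : MeasurableSet {x | f x = -1} := hfm (measurableSet_singleton (-1))
    have hA2p : MeasurableSet A2p := hle.inter hfm1
    have hA2m : MeasurableSet A2m := hle.compl.inter hf1
    have hA3p : MeasurableSet A3p := hle.inter (hf1.compl.inter hfm1.compl)
    have hA3m : MeasurableSet A3m := hle.compl.inter (hf1.compl.inter hfm1.compl)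
    -- a.e. decomposition of the excess loss
    have hptwise : ∀ p : X × ℝ, p.2 = 1 ∨ p.2 = -1 →
        ((if f p.1 ≠ p.2 then (1 : ℝ) else 0) - (if fs p.1 ≠ p.2 then 1 else 0))
          = Set.indicator {p : X × ℝ | p.1 ∈ A2p} (fun p => 0 + 1 * p.2) p + Set.indicator {p : X × ℝ | p.1 ∈ A2m} (fun p => 0 + (-1) * p.2) p
            + Set.indicator {p : X × ℝ | p.1 ∈ A3p} (fun p => (1/2) + (1/2) * p.2) p + Set.indicator {p : X × ℝ | p.1 ∈ A3m} (fun p => (1/2) + (-(1/2)) * p.2) p ∧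
        ((if f p.1 ≠ p.2 then (1 : ℝ) else 0) - (if fs p.1 ≠ p.2 then 1 else 0)) ^ 2
          = Set.indicator {p : X × ℝ | p.1 ∈ A2p} (fun p => 1 + 0 * p.2) p + Set.indicator {p : X × ℝ | p.1 ∈ A2m} (fun p => 1 + 0 * p.2) p
            + Set.indicator {p : X × ℝ | p.1 ∈ A3p} (fun p => (1/2) + (1/2) * p.2) p + Set.indicator {p : X × ℝ | p.1 ∈ A3m} (fun p => (1/2) + (-(1/2)) * p.2) p := by
      rintro ⟨x, y⟩ hp
      have hp' : y = 1 ∨ y = -1 := hp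
      simp only [Set.indicator_apply, Set.mem_setOf_eq, hA2pdef, hA2mdef, hA3pdef, hA3mdef]
      rw [hfs x]
      rcases hp' with rfl | rfl <;>
        by_cases h0 : 0 ≤ η x <;> by_cases hx1 : f x = 1 <;> by_cases hxm : f x = -1 <;>
        constructor <;> norm_num [h0, hx1, hxm]
    have hg1 : (fun p : X × ℝ =>
        ((if f p.1 ≠ p.2 then (1 : ℝ) else 0) - (if fs p.1 ≠ p.2 then 1 else 0)))
        =ᵐ[μ] fun p : X × ℝ =>
          Set.indicator {p : X × ℝ | p.1 ∈ A2p} (fun p => 0 + 1 * p.2) p + Set.indicator {p : X × ℝ | p.1 ∈ A2m} (fun p => 0 + (-1) * p.2) p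
          + Set.indicator {p : X × ℝ | p.1 ∈ A3p} (fun p => (1/2) + (1/2) * p.2) p + Set.indicator {p : X × ℝ | p.1 ∈ A3m} (fun p => (1/2) + (-(1/2)) * p.2) p := by
      filter_upwards [hlabel] with p hp
      exact (hptwise p hp).1
    have hg2 : (fun p : X × ℝ =>
        ((if f p.1 ≠ p.2 then (1 : ℝ) else 0) - (if fs p.1 ≠ p.2 then 1 else 0)) ^ 2)
        =ᵐ[μ] fun p : X × ℝ =>
          Set.indicator {p : X × ℝ | p.1 ∈ A2p} (fun p => 1 + 0 * p.2) p + Set.indicator {p : X × ℝ | p.1 ∈ A2m} (fun p => 1 + 0 * p.2) p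
          + Set.indicator {p : X × ℝ | p.1 ∈ A3p} (fun p => (1/2) + (1/2) * p.2) p + Set.indicator {p : X × ℝ | p.1 ∈ A3m} (fun p => (1/2) + (-(1/2)) * p.2) p := by
      filter_upwards [hlabel] with p hp
      exact (hptwise p hp).2
    have i2p := massart_piece_int μ hyint A2p hA2p
    have i2m := massart_piece_int μ hyint A2m hA2m
    have i3p := massart_piece_int μ hyint A3p hA3p
    have i3m := massart_piece_int μ hyint A3m hA3m
    have e2p := massart_piece μ η hcond hyint A2p hA2p
    have e2m := massart_piece μ η hcond hyint A2m hA2m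
    have e3p := massart_piece μ η hcond hyint A3p hA3p
    have e3m := massart_piece μ η hcond hyint A3m hA3m
    have iAB1 : Integrable (fun p : X × ℝ =>
        Set.indicator {p : X × ℝ | p.1 ∈ A2p} (fun p => 1 + 0 * p.2) p + Set.indicator {p : X × ℝ | p.1 ∈ A2m} (fun p => 1 + 0 * p.2) p) μ := (i2p 1 0).add (i2m 1 0)
    have iABC1 : Integrable (fun p : X × ℝ =>
        Set.indicator {p : X × ℝ | p.1 ∈ A2p} (fun p => 1 + 0 * p.2) p + Set.indicator {p : X × ℝ | p.1 ∈ A2m} (fun p => 1 + 0 * p.2) p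
        + Set.indicator {p : X × ℝ | p.1 ∈ A3p} (fun p => (1/2) + (1/2) * p.2) p) μ := iAB1.add (i3p (1/2) (1/2))
    have iAB2 : Integrable (fun p : X × ℝ =>
        Set.indicator {p : X × ℝ | p.1 ∈ A2p} (fun p => 0 + 1 * p.2) p + Set.indicator {p : X × ℝ | p.1 ∈ A2m} (fun p => 0 + (-1) * p.2) p) μ := (i2p 0 1).add (i2m 0 (-1))
    have iABC2 : Integrable (fun p : X × ℝ =>
        Set.indicator {p : X × ℝ | p.1 ∈ A2p} (fun p => 0 + 1 * p.2) p + Set.indicator {p : X × ℝ | p.1 ∈ A2m} (fun p => 0 + (-1) * p.2) p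
        + Set.indicator {p : X × ℝ | p.1 ∈ A3p} (fun p => (1/2) + (1/2) * p.2) p) μ := iAB2.add (i3p (1/2) (1/2))
    rw [integral_congr_ae hg1, integral_congr_ae hg2,
      integral_add iABC1 (i3m (1/2) (-(1/2))),
      integral_add iAB1 (i3p (1/2) (1/2)),
      integral_add (i2p 1 0) (i2m 1 0),
      integral_add iABC2 (i3m (1/2) (-(1/2))),
      integral_add iAB2 (i3p (1/2) (1/2)),
      integral_add (i2p 0 1) (i2m 0 (-1)),
      e2p 1 0, e2m 1 0, e3p (1/2) (1/2), e3m (1/2) (-(1/2)),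
      e2p 0 1, e2m 0 (-1)]
    set t2p := (ν A2p).toReal with ht2p
    set t2m := (ν A2m).toReal with ht2m
    set t3p := (ν A3p).toReal with ht3p
    set t3m := (ν A3m).toReal with ht3m
    set I2p := ∫ x in A2p, η x ∂ν with hI2p
    set I2m := ∫ x in A2m, η x ∂ν with hI2m
    set I3p := ∫ x in A3p, η x ∂ν with hI3p
    set I3m := ∫ x in A3m, η x ∂ν with hI3m
    have m2p : h * t2p ≤ I2p := hmargpos A2p hA2p (fun x hx => hx.1)
    have m2m : I2m ≤ -(h * t2m) := hmargneg A2m hA2m (fun x hx => hx.1)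
    have m3p : 0 ≤ I3p := setIntegral_nonneg hA3p (fun x hx => hx.1)
    have m3m : I3m ≤ 0 := setIntegral_nonpos hA3m (fun x hx => le_of_lt (lt_of_not_ge hx.1))
    have b3p : I3p ≤ t3p := (hbound A3p hA3p).1
    have b3m : -t3m ≤ I3m := (hbound A3m hA3m).2
    have n2p : 0 ≤ t2p := ENNReal.toReal_nonneg
    have n2m : 0 ≤ t2m := ENNReal.toReal_nonneg
    have n3p : 0 ≤ t3p := ENNReal.toReal_nonneg
    have n3m : 0 ≤ t3m := ENNReal.toReal_nonneg
    have key2 : ∀ a b : ℝ, h * a ≤ b → a ≤ 1/h * b := by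
      intro a b hab
      rw [div_mul_eq_mul_div, one_mul, le_div_iff₀ hh]
      nlinarith
    apply key2
    nlinarith [mul_nonneg (sub_nonneg.mpr hh1) m3p, mul_nonneg (sub_nonneg.mpr hh1) n3p,
      mul_nonneg (sub_nonneg.mpr hh1) n3m]
  · -- Bayes risk bound
    set P : Set X := {x | 0 ≤ η x} with hPdef
    have hP : MeasurableSet P := measurableSet_le measurable_const hη
    have hfsm : Measurable fs := by
      have : fs = fun x => if 0 ≤ η x then (1:ℝ) else -1 := funext hfs
      rw [this]
      exact Measurable.ite hP measurable_const measurable_const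
    have hS : MeasurableSet {p : X × ℝ | fs p.1 ≠ p.2} := by
      have : {p : X × ℝ | fs p.1 ≠ p.2} = {p : X × ℝ | fs p.1 = p.2}ᶜ := by
        ext p; simp
      rw [this]
      exact (measurableSet_eq_fun (hfsm.comp measurable_fst) measurable_snd).compl
    have key : (μ {p : X × ℝ | fs p.1 ≠ p.2}).toReal
        = ∫ p : X × ℝ, Set.indicator {p : X × ℝ | p.1 ∈ P} (fun p => (1/2) + (-(1/2)) * p.2) p
          + Set.indicator {p : X × ℝ | p.1 ∈ Pᶜ} (fun p => (1/2) + (1/2) * p.2) p ∂μ := by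
      rw [← measureReal_def, ← integral_indicator_one hS]
      refine integral_congr_ae ?_
      filter_upwards [hlabel] with p hp
      obtain ⟨x, y⟩ := p
      have hp' : y = 1 ∨ y = -1 := hp
      simp only [Set.indicator_apply, Set.mem_setOf_eq, Set.mem_compl_iff, hPdef, Pi.one_apply]
      rw [hfs x]
      rcases hp' with rfl | rfl <;> by_cases h0 : 0 ≤ η x <;> norm_num [h0]
    rw [key, integral_add (massart_piece_int μ hyint P hP (1/2) (-(1/2)))
      (massart_piece_int μ hyint Pᶜ hP.compl (1/2) (1/2)),
      massart_piece μ η hcond hyint P hP (1/2) (-(1/2)),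
      massart_piece μ η hcond hyint Pᶜ hP.compl (1/2) (1/2)]
    have mP : h * (ν P).toReal ≤ ∫ x in P, η x ∂ν := hmargpos P hP (fun x hx => hx)
    have mPc : ∫ x in Pᶜ, η x ∂ν ≤ -(h * (ν Pᶜ).toReal) :=
      hmargneg Pᶜ hP.compl (fun x hx => hx)
    have hsum : (ν P).toReal + (ν Pᶜ).toReal = 1 := by
      have h1 : ν P + ν Pᶜ = 1 := by
        rw [measure_add_measure_compl hP]; exact measure_univ
      have := congrArg ENNReal.toReal h1
      rwa [ENNReal.toReal_add (measure_ne_top ν P) (measure_ne_top ν Pᶜ), ENNReal.toReal_one]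
        at this
    nlinarith [ENNReal.toReal_nonneg (a := ν P), ENNReal.toReal_nonneg (a := ν Pᶜ)]
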